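/- Let u = (u1,u2,u3) ∈ ℝ³ be a unit vector with u1 > 0 and u3 = 0. Then the matrix Q[u] (as defined in the context) has a repeated eigenvalue (i.e. is uniaxial) if and only if u = (√3/2, 1/2, 0) or u = (√3/2, -1/2, 0). -/

import Mathlib

/-- For a unit vector u with u1 > 0 and u3 = 0, the matrix Q[u] (whose eigenvalues are
    λ1 = -(1/2)(u1 + u2/√3) and λ± = (1/4)[(u1 + u2/√3) ± √((u1-√3u2)² + 4u3²)]) is
    uniaxial (exactly two of the three eigenvalues coincide and are nonzero) if and only if
    u = (√3/2, 1/2, 0) or u = (√3/2, -1/2, 0). -/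
theorem uniaxial_iff (u1 u2 u3 : ℝ)
    (hunit : u1 ^ 2 + u2 ^ 2 + u3 ^ 2 = 1) (hpos : 0 < u1) (hu3 : u3 = 0)
    (lam1 lam2 lam3 : ℝ)
    (hlam1 : lam1 = -(1 / 2) * (u1 + u2 / Real.sqrt 3))
    (hlam2 : lam2 = (1 / 4) * ((u1 + u2 / Real.sqrt 3)
        - Real.sqrt ((u1 - Real.sqrt 3 * u2) ^ 2 + 4 * u3 ^ 2)))
    (hlam3 : lam3 = (1 / 4) * ((u1 + u2 / Real.sqrt 3)
        + Real.sqrt ((u1 - Real.sqrt 3 * u2) ^ 2 + 4 * u3 ^ 2))) :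
    ((lam1 = lam2 ∧ lam1 ≠ lam3 ∧ lam1 ≠ 0) ∨
     (lam1 = lam3 ∧ lam1 ≠ lam2 ∧ lam1 ≠ 0) ∨
     (lam2 = lam3 ∧ lam2 ≠ lam1 ∧ lam2 ≠ 0)) ↔
      ((u1, u2, u3) = (Real.sqrt 3 / 2, 1 / 2, 0) ∨
       (u1, u2, u3) = (Real.sqrt 3 / 2, -(1 / 2), 0)) := by
  subst hu3 hlam1 hlam2 hlam3
  set s := Real.sqrt 3 with hsdef
  have hs2 : s ^ 2 = 3 := Real.sq_sqrt (by norm_num)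
  have hs0 : (0:ℝ) < s := Real.sqrt_pos.mpr (by norm_num)
  have hsne : s ≠ 0 := ne_of_gt hs0
  have hd : Real.sqrt ((u1 - s * u2) ^ 2 + 4 * 0 ^ 2) = |u1 - s * u2| := by
    rw [show (4:ℝ) * 0 ^ 2 = 0 by ring, add_zero, Real.sqrt_sq_eq_abs]
  clear_value s
  rw [hd]
  simp only [Prod.mk.injEq, and_true]
  constructor
  · rintro (⟨h1, h2, h3⟩ | ⟨h1, h2, h3⟩ | ⟨h1, h2, h3⟩)
    · -- lam1 = lam2 : expect (s/2, -1/2)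
      right
      have habs : |u1 - s * u2| = 3 * (u1 + u2 / s) := by linarith
      rcases abs_cases (u1 - s * u2) with ⟨he, hge⟩ | ⟨he, hlt⟩
      · have hx : u1 - s * u2 = 3 * (u1 + u2 / s) := he.symm.trans habs
        field_simp at hx
        have hu2 : u2 = -(s * u1) / 3 := by
          linear_combination (-(1:ℝ)/6) * hx - (u2/6) * hs2
        have hu1 : u1 = s / 2 := by
          have hsq : (u1 - s/2) * (u1 + s/2) = 0 := by
            nlinarith [hu2, hunit, hs2]
          rcases mul_eq_zero.mp hsq with h | h
          · linarith
          · nlinarith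
        refine ⟨hu1, ?_⟩
        rw [hu2, hu1]
        field_simp
        linear_combination (-1) * hs2
      · exfalso
        have hx : -(u1 - s * u2) = 3 * (u1 + u2 / s) := he.symm.trans habs
        field_simp at hx
        have h0 : u1 * s = 0 := by
          linear_combination (-(1:ℝ)/4) * hx + (u2/4) * hs2
        nlinarith [mul_pos hpos hs0]
    · -- lam1 = lam3 : impossible
      exfalso
      have habs : |u1 - s * u2| = -3 * (u1 + u2 / s) := by linarith
      rcases abs_cases (u1 - s * u2) with ⟨he, hge⟩ | ⟨he, hlt⟩
      · have hx : u1 - s * u2 = -3 * (u1 + u2 / s) := he.symm.trans habs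
        field_simp at hx
        have h0 : u1 * s = 0 := by
          linear_combination ((1:ℝ)/4) * hx + (u2/4) * hs2
        nlinarith [mul_pos hpos hs0]
      · have hx : -(u1 - s * u2) = -3 * (u1 + u2 / s) := he.symm.trans habs
        field_simp at hx
        have hu2 : u2 = -(s * u1) / 3 := by
          linear_combination ((1:ℝ)/6) * hx - (u2/6) * hs2
        -- then u1 - s*u2 = u1 + s^2*u1/3 = 2*u1 > 0, contradicting hlt
        rw [hu2] at hlt
        nlinarith [hs2, hpos]
    · -- lam2 = lam3 : expect (s/2, 1/2)
      left
      have habs : |u1 - s * u2| = 0 := by linarith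
      have hx : u1 = s * u2 := by
        have := abs_eq_zero.mp habs; linarith
      have hu2 : u2 = 1 / 2 := by
        have h4 : (2 * u2 - 1) * (2 * u2 + 1) = 0 := by
          nlinarith [hx, hunit, hs2]
        have hu2pos : 0 < u2 := by
          by_contra h
          push_neg at h
          nlinarith [hx, mul_nonpos_of_nonneg_of_nonpos (le_of_lt hs0) h]
        rcases mul_eq_zero.mp h4 with h | h
        · linarith
        · linarith
      refine ⟨?_, hu2⟩
      rw [hx, hu2]; ring
  · rintro (⟨h1, h2⟩ | ⟨h1, h2⟩)
    · subst h1 h2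
      right; right
      have h0 : |s / 2 - s * (1/2)| = 0 := by
        rw [show s / 2 - s * (1/2) = 0 by ring, abs_zero]
      rw [h0]
      have ht : 0 < s / 2 + 1 / 2 / s := by positivity
      refine ⟨by ring, ?_, ?_⟩
      · intro h; nlinarith
      · intro h; nlinarith
    · subst h1 h2
      left
      have h0 : |s / 2 - s * -(1/2)| = s := by
        rw [show s / 2 - s * -(1/2) = s by ring, abs_of_pos hs0]
      rw [h0]
      have ht : 0 < s / 2 + -(1/2) / s := by
        rw [div_add_div _ _ (by norm_num) hsne]
        apply div_pos _ (by positivity)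
        nlinarith
      refine ⟨?_, ?_, ?_⟩
      · field_simp
        linear_combination (-2) * hs2
      · intro h; linarith
      · intro h; linarith
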